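/- Let A = (a_{i+j-1}) be an n×n Hankel matrix over a field F and 1 ≤ k ≤ n-1 with the leading principal submatrix A_k nonsingular. Let x = (x_1,...,x_k) be the unique solution of A_k x^T = (a_{k+1},...,a_{2k})^T. Then A_d is singular for all d with k < d ≤ n if and only if a_{k+t} = x_1 a_t + x_2 a_{t+1} + ... + x_k a_{t+k-1} holds for all t = 1,...,n. -/

import Mathlib

open Matrix in
private lemma hankel_sum_eq_sum_comp {F : Type*} [AddCommMonoid F] {d k : ℕ}
    (f : Fin k → Fin d) (hf : Function.Injective f) (g : Fin d → F)
    (hg : ∀ j, (∀ s, f s ≠ j) → g j = 0) :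
    ∑ j, g j = ∑ s, g (f s) := by
  classical
  have h1 : ∑ s, g (f s) = ∑ j ∈ Finset.univ.image f, g j :=
    (Finset.sum_image (fun x _ y _ h => hf h)).symm
  rw [h1]
  refine (Finset.sum_subset (Finset.subset_univ _) ?_).symm
  intro j _ hj
  refine hg j fun s hs => hj ?_
  exact Finset.mem_image.2 ⟨s, Finset.mem_univ _, hs⟩

/-- Let `A` be an `n × n` Hankel matrix with `(i,j)` entry `a_{i+j-1}` (1-based), let
`1 ≤ k ≤ n - 1` with the leading principal submatrix `A_k` nonsingular, and let
`x = (x_1, ..., x_k)` solve `A_k xᵀ = (a_{k+1}, ..., a_{2k})ᵀ`, i.e.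
`a_{k+t} = ∑_{s=1}^k x_s a_{t+s-1}` for `t = 1, ..., k`.  Then `A_d` is singular for all
`k < d ≤ n` iff this relation holds for all `t = 1, ..., n`. -/
theorem hankel_delta_eq_iff (F : Type*) [Field F] (n k : ℕ) (hk1 : 1 ≤ k)
    (hkn : k ≤ n - 1) (hk : k ≤ n) (a : ℕ → F) (A : Matrix (Fin n) (Fin n) F)
    (hA : ∀ i j : Fin n, A i j = a ((i : ℕ) + (j : ℕ) + 1))
    (hAk : (A.submatrix (Fin.castLE hk) (Fin.castLE hk)).det ≠ 0)
    (x : Fin k → F)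
    (hx : ∀ t : ℕ, 1 ≤ t → t ≤ k → a (k + t) = ∑ s : Fin k, x s * a (t + (s : ℕ))) :
    (∀ (d : ℕ) (hd : d ≤ n), k < d →
        (A.submatrix (Fin.castLE hd) (Fin.castLE hd)).det = 0)
      ↔ ∀ t : ℕ, 1 ≤ t → t ≤ n → a (k + t) = ∑ s : Fin k, x s * a (t + (s : ℕ)) := by
  classical
  constructor
  · intro hsing t
    induction t using Nat.strong_induction_on with
    | _ t ih =>
    intro ht1 htn
    by_cases htk : t ≤ k
    · exact hx t ht1 htk
    push_neg at htk
    by_contra hne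
    -- the "defect" sequence
    set b : ℕ → F := fun m => a m - ∑ s : Fin k, x s * a (m - k + (s : ℕ)) with hbdef
    have hb0 : ∀ m, k + 1 ≤ m → m ≤ k + t - 1 → b m = 0 := by
      intro m hm1 hm2
      have key : a m = ∑ s : Fin k, x s * a (m - k + (s : ℕ)) := by
        have h2 : m - k < t := by omega
        have := ih (m - k) h2 (by omega) (by omega)
        rwa [show k + (m - k) = m by omega] at this
      simp [hbdef, key]
    have hbt : b (k + t) ≠ 0 := by
      intro h
      apply hne
      have h2 : k + t - k = t := by omega
      simp only [hbdef] at h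
      simp only [h2, sub_eq_zero] at h
      exact h
    -- the matrix A_t
    set At := A.submatrix (Fin.castLE htn) (Fin.castLE htn) with hAtdef
    have hAt0 : At.det = 0 := hsing t htn htk
    have hAtE : ∀ i j : Fin t, At i j = a ((i : ℕ) + (j : ℕ) + 1) := by
      intro i j
      simp [hAtdef, hA]
    -- row-reduction matrix
    set N : Matrix (Fin t) (Fin t) F := fun i j =>
      if h : k ≤ (i : ℕ) ∧ (i : ℕ) - k ≤ (j : ℕ) ∧ (j : ℕ) < (i : ℕ) then
        x ⟨(j : ℕ) - ((i : ℕ) - k), by omega⟩ else 0 with hNdef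
    set E : Matrix (Fin t) (Fin t) F := 1 - N with hEdef
    have hEtri : E.BlockTriangular OrderDual.toDual := by
      intro i j hij
      have hij' : (i : ℕ) < (j : ℕ) := hij
      have h1 : (1 : Matrix (Fin t) (Fin t) F) i j = 0 := by
        rw [Matrix.one_apply_ne]
        exact fun h => by omega
      have h2 : N i j = 0 := by
        simp only [hNdef]
        rw [dif_neg]
        omega
      simp [hEdef, h1, h2]
    have hEdet : E.det = 1 := by
      rw [Matrix.det_of_lowerTriangular E hEtri]
      have : ∀ i : Fin t, E i i = 1 := by
        intro i
        have h2 : N i i = 0 := by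
          simp only [hNdef]
          rw [dif_neg]
          omega
        simp [hEdef, h2]
      simp [this]
    set M : Matrix (Fin t) (Fin t) F := E * At with hMdef
    have hMdet : M.det = At.det := by
      rw [hMdef, Matrix.det_mul, hEdet, one_mul]
    -- entries of M
    have hM : ∀ i j : Fin t, M i j =
        if (i : ℕ) < k then a ((i : ℕ) + (j : ℕ) + 1) else b ((i : ℕ) + (j : ℕ) + 1) := by
      intro i j
      have hexp : M i j = At i j - ∑ l : Fin t, N i l * At l j := by
        rw [hMdef, hEdef, Matrix.sub_mul, Matrix.one_mul]
        simp [Matrix.sub_apply, Matrix.mul_apply]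
      by_cases hik : (i : ℕ) < k
      · have hz : ∀ l : Fin t, N i l * At l j = 0 := by
          intro l
          simp only [hNdef]
          rw [dif_neg, zero_mul]
          omega
        rw [hexp, if_pos hik, hAtE]
        rw [Finset.sum_eq_zero fun l _ => hz l, sub_zero]
      · push_neg at hik
        rw [hexp, if_neg (by omega)]
        have hf : ∀ s : Fin k, (i : ℕ) - k + (s : ℕ) < t := fun s => by omega
        set f : Fin k → Fin t := fun s => ⟨(i : ℕ) - k + (s : ℕ), hf s⟩ with hfdef
        have hfinj : Function.Injective f := by
          intro s s' h
          have : (i : ℕ) - k + (s : ℕ) = (i : ℕ) - k + (s' : ℕ) := congrArg Fin.val h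
          exact Fin.ext (by omega)
        have hsum : ∑ l : Fin t, N i l * At l j = ∑ s : Fin k, N i (f s) * At (f s) j := by
          refine hankel_sum_eq_sum_comp f hfinj _ ?_
          intro l hl
          simp only [hNdef]
          by_cases hc : k ≤ (i : ℕ) ∧ (i : ℕ) - k ≤ (l : ℕ) ∧ (l : ℕ) < (i : ℕ)
          · exfalso
            refine hl ⟨(l : ℕ) - ((i : ℕ) - k), by omega⟩ ?_
            exact Fin.ext (by simp [hfdef]; omega)
          · rw [dif_neg hc, zero_mul]
        have hterm : ∀ s : Fin k, N i (f s) * At (f s) j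
            = x s * a ((i : ℕ) + (j : ℕ) + 1 - k + (s : ℕ)) := by
          intro s
          have hc : k ≤ (i : ℕ) ∧ (i : ℕ) - k ≤ ((f s) : ℕ) ∧ ((f s) : ℕ) < (i : ℕ) := by
            refine ⟨hik, ?_, ?_⟩ <;> simp [hfdef] <;> omega
          simp only [hNdef, dif_pos hc]
          rw [hAtE]
          have h1 : x (⟨((f s) : ℕ) - ((i : ℕ) - k), by omega⟩ : Fin k) = x s := by
            congr 1
            exact Fin.ext (by simp [hfdef])
          have h2 : ((f s) : ℕ) + (j : ℕ) + 1 = (i : ℕ) + (j : ℕ) + 1 - k + (s : ℕ) := by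
            simp [hfdef]; omega
          rw [h1, h2]
        rw [hsum, Finset.sum_congr rfl fun s _ => hterm s, hAtE, hbdef]
    -- block decomposition
    have hkt : k + (t - k) = t := by omega
    set e : Fin k ⊕ Fin (t - k) ≃ Fin t := finSumFinEquiv.trans (finCongr hkt) with hedef
    have hel : ∀ s : Fin k, ((e (Sum.inl s) : Fin t) : ℕ) = (s : ℕ) := by
      intro s; simp [hedef]
    have her : ∀ s : Fin (t - k), ((e (Sum.inr s) : Fin t) : ℕ) = k + (s : ℕ) := by
      intro s; simp [hedef]
    set P : Matrix (Fin k) (Fin k) F := fun s s' => a ((s : ℕ) + (s' : ℕ) + 1) with hPdef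
    set Q : Matrix (Fin k) (Fin (t - k)) F :=
      fun s j => a ((s : ℕ) + (k + (j : ℕ)) + 1) with hQdef
    set D : Matrix (Fin (t - k)) (Fin (t - k)) F :=
      fun i j => b (k + (i : ℕ) + (k + (j : ℕ)) + 1) with hDdef
    have hblock : M.submatrix e e = Matrix.fromBlocks P Q 0 D := by
      ext i j
      cases i with
      | inl s =>
        cases j with
        | inl s' =>
          simp only [Matrix.submatrix_apply, Matrix.fromBlocks_apply₁₁]
          rw [hM, if_pos (by rw [hel]; omega), hel, hel]
        | inr s' =>
          simp only [Matrix.submatrix_apply, Matrix.fromBlocks_apply₁₂]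
          rw [hM, if_pos (by rw [hel]; omega), hel, her]
      | inr s =>
        cases j with
        | inl s' =>
          simp only [Matrix.submatrix_apply, Matrix.fromBlocks_apply₂₁, Matrix.zero_apply]
          rw [hM, if_neg (by rw [her]; omega), her, hel]
          exact hb0 _ (by omega) (by omega)
        | inr s' =>
          simp only [Matrix.submatrix_apply, Matrix.fromBlocks_apply₂₂]
          rw [hM, if_neg (by rw [her]; omega), her, her]
    have hPdet : P.det ≠ 0 := by
      have : P = A.submatrix (Fin.castLE hk) (Fin.castLE hk) := by
        ext s s'
        simp [hPdef, hA]
      rwa [this]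
    have hDdet : D.det ≠ 0 := by
      set U : Matrix (Fin (t - k)) (Fin (t - k)) F := D.submatrix Fin.revPerm id with hUdef
      have hUtri : U.BlockTriangular id := by
        intro i j hij
        have hij' : (j : ℕ) < (i : ℕ) := hij
        have hrev : ((Fin.revPerm i : Fin (t - k)) : ℕ) = t - k - 1 - (i : ℕ) := by
          simp [Fin.revPerm, Fin.val_rev]; omega
        simp only [hUdef, Matrix.submatrix_apply, id, hDdef]
        change b (k + ((Fin.revPerm i : Fin (t - k)) : ℕ) + (k + (j : ℕ)) + 1) = 0
        have h1 := Fin.val_rev i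
        have h2 := i.isLt
        exact hb0 _ (by omega) (by omega)
      have hUdet : U.det = b (k + t) ^ (t - k) := by
        rw [Matrix.det_of_upperTriangular hUtri]
        have : ∀ i : Fin (t - k), U i i = b (k + t) := by
          intro i
          simp only [hUdef, Matrix.submatrix_apply, id, hDdef]
          change b (k + ((Fin.revPerm i : Fin (t - k)) : ℕ) + (k + (i : ℕ)) + 1) = b (k + t)
          congr 1
          have h1 : ((Fin.revPerm i : Fin (t - k)) : ℕ) = t - k - ((i : ℕ) + 1) :=
            Fin.val_rev i
          have h2 := i.isLt
          omega
        rw [Finset.prod_congr rfl fun i _ => this i]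
        simp
      intro hD0
      have : U.det = 0 := by
        rw [hUdef, Matrix.det_permute, hD0, mul_zero]
      rw [hUdet] at this
      exact pow_ne_zero _ hbt this
    have : M.det ≠ 0 := by
      rw [← Matrix.det_submatrix_equiv_self e M, hblock, Matrix.det_fromBlocks_zero₂₁]
      exact mul_ne_zero hPdet hDdet
    rw [hMdet] at this
    exact this hAt0
  · intro hrel d hd hkd
    rw [← Matrix.exists_mulVec_eq_zero_iff]
    set v : Fin d → F := fun j =>
      if hj : (j : ℕ) < k then x ⟨j, hj⟩ else if (j : ℕ) = k then -1 else 0 with hvdef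
    refine ⟨v, ?_, ?_⟩
    · intro hv0
      have : v ⟨k, by omega⟩ = 0 := congrFun hv0 _
      simp only [hvdef] at this
      simp at this
    · funext i
      rw [Matrix.mulVec, dotProduct]
      obtain ⟨f, hfval⟩ : ∃ f : Fin (k + 1) → Fin d, ∀ s, ((f s) : ℕ) = (s : ℕ) :=
        ⟨fun s => ⟨(s : ℕ), by omega⟩, fun s => rfl⟩
      have hfinj : Function.Injective f := by
        intro s s' h
        have h2 := congrArg Fin.val h
        rw [hfval, hfval] at h2
        exact Fin.ext h2
      have hsum : ∑ j : Fin d, A.submatrix (Fin.castLE hd) (Fin.castLE hd) i j * v j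
          = ∑ s : Fin (k + 1),
            A.submatrix (Fin.castLE hd) (Fin.castLE hd) i (f s) * v (f s) := by
        refine hankel_sum_eq_sum_comp f hfinj _ ?_
        intro j hj
        have hjk : k < (j : ℕ) := by
          by_contra h
          exact hj ⟨(j : ℕ), by omega⟩ (Fin.ext (by rw [hfval]))
        have : v j = 0 := by
          simp only [hvdef]
          rw [dif_neg (by omega), if_neg (by omega)]
        rw [this, mul_zero]
      rw [hsum, Fin.sum_univ_castSucc]
      have hAe : ∀ j : Fin d, A.submatrix (Fin.castLE hd) (Fin.castLE hd) i j
          = a ((i : ℕ) + (j : ℕ) + 1) := by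
        intro j; simp [hA]
      have hlast : A.submatrix (Fin.castLE hd) (Fin.castLE hd) i (f (Fin.last k))
          * v (f (Fin.last k)) = -(a ((i : ℕ) + k + 1)) := by
        rw [hAe]
        have h1 : ((f (Fin.last k)) : ℕ) = k := by rw [hfval]; rfl
        have h2 : v (f (Fin.last k)) = -1 := by
          simp only [hvdef]
          rw [dif_neg (by rw [h1]; omega), if_pos h1]
        rw [h2, h1]
        ring
      have hmain : ∀ s : Fin k,
          A.submatrix (Fin.castLE hd) (Fin.castLE hd) i (f (Fin.castSucc s)) * v (f (Fin.castSucc s))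
          = x s * a (((i : ℕ) + 1) + (s : ℕ)) := by
        intro s
        have h1 : ((f (Fin.castSucc s)) : ℕ) = (s : ℕ) := by rw [hfval]; rfl
        have h2 : v (f (Fin.castSucc s)) = x s := by
          simp only [hvdef]
          have hs : ((f (Fin.castSucc s)) : ℕ) < k := by rw [h1]; omega
          rw [dif_pos hs]
          exact congrArg x (Fin.ext h1)
        rw [hAe, h1, h2, mul_comm]
        congr 2
        omega
      rw [hlast, Finset.sum_congr rfl fun s _ => hmain s]
      have := hrel ((i : ℕ) + 1) (by omega) (by omega)
      rw [show k + ((i : ℕ) + 1) = (i : ℕ) + k + 1 by omega] at this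
      rw [← this]
      simp
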